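/- Let λ ∈ ℂ and let u ∈ C^∞[0,1] solve −(1−ρ²)u''(ρ) − (2(1−ρ²)/ρ)u'(ρ) + 2λρu'(ρ) + (V(ρ)/ρ²)u(ρ) + λ(λ+1)u(ρ) = 0 on (0,1), where V(ρ) = 2(1−6ρ²+ρ⁴)/(1+ρ²)². Define ũ(ρ) := (1−ρ²)^{λ/2} u(ρ) on (0,1). Then ũ satisfies −(1−ρ²)² ũ''(ρ) − (2(1−ρ²)²/ρ) ũ'(ρ) + (((1−ρ²)V(ρ) − ρ²)/ρ²) ũ(ρ) = −(1−λ)² ũ(ρ) for all ρ ∈ (0,1). -/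

import Mathlib

/-- The potential `V(ρ) = 2(1−6ρ²+ρ⁴)/(1+ρ²)²`. -/
noncomputable def Vpot (ρ : ℝ) : ℝ := 2 * (1 - 6 * ρ ^ 2 + ρ ^ 4) / (1 + ρ ^ 2) ^ 2

set_option maxHeartbeats 1000000 in
lemma key (lam r A V U0 U1 U2 : ℂ) (hr : r ≠ 0) (hs : 1 - r ^ 2 ≠ 0)
    (hode : -(1 - r^2) * U2 - 2 * (1 - r^2) / r * U1 + 2 * lam * r * U1
      + V / r^2 * U0 + lam*(lam+1)*U0 = 0)
    (B C : ℂ) (hB : A = (1 - r^2) * B) (hC : A = (1 - r^2)^2 * C) :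
    -(1 - r^2)^2 * (lam / 2 * ((lam / 2 - 1) * C * -(2*r) * -(2*r) + B * -2) * U0
        + lam / 2 * B * -(2*r) * U1 + (lam / 2 * B * -(2*r) * U1 + A * U2))
      - (2 * (1 - r^2)^2 / r) * (lam / 2 * B * -(2*r) * U0 + A * U1)
      + (((1 - r^2) * V - r^2) / r^2) * (A * U0)
      = -(1 - lam)^2 * (A * U0) := by
  field_simp at hode ⊢
  linear_combination (1 - r^2)*A*hode
    - (1 - r^2)*(3*r^2*lam*U0 + 2*r^3*lam*U1) * hB
    + (r^4*lam*(lam-2)*U0) * hC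


set_option maxHeartbeats 1000000 in
/-- if `u ∈ C^∞[0,1]` solves the eigenvalue equation `(E_λ)` on `(0,1)`,
then `ũ(ρ) := (1−ρ²)^{λ/2} u(ρ)` (principal branch of the complex power) satisfies
`−(1−ρ²)² ũ'' − (2(1−ρ²)²/ρ) ũ' + (((1−ρ²)V(ρ) − ρ²)/ρ²) ũ = −(1−λ)² ũ` on `(0,1)`. -/
theorem stmt_17 (lam : ℂ) (u : ℝ → ℂ)
    (hu : ContDiffOn ℝ (⊤ : ℕ∞) u (Set.Icc 0 1))
    (hode : ∀ ρ ∈ Set.Ioo (0:ℝ) 1,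
      -(1 - (ρ:ℂ) ^ 2) * deriv (deriv u) ρ
      - (2 * (1 - (ρ:ℂ) ^ 2) / (ρ:ℂ)) * deriv u ρ
      + 2 * lam * (ρ:ℂ) * deriv u ρ
      + (((Vpot ρ : ℝ) : ℂ) / (ρ:ℂ) ^ 2) * u ρ
      + lam * (lam + 1) * u ρ = 0) :
    ∀ ρ ∈ Set.Ioo (0:ℝ) 1,
      -(1 - (ρ:ℂ) ^ 2) ^ 2
          * deriv (deriv (fun x : ℝ => (1 - (x:ℂ) ^ 2) ^ (lam / 2) * u x)) ρ
      - (2 * (1 - (ρ:ℂ) ^ 2) ^ 2 / (ρ:ℂ))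
          * deriv (fun x : ℝ => (1 - (x:ℂ) ^ 2) ^ (lam / 2) * u x) ρ
      + (((1 - (ρ:ℂ) ^ 2) * ((Vpot ρ : ℝ) : ℂ) - (ρ:ℂ) ^ 2) / (ρ:ℂ) ^ 2)
          * ((1 - (ρ:ℂ) ^ 2) ^ (lam / 2) * u ρ)
      = -(1 - lam) ^ 2 * ((1 - (ρ:ℂ) ^ 2) ^ (lam / 2) * u ρ) := by
  -- preliminaries over ℂ
  have hlin : ∀ z : ℂ, HasDerivAt (fun w : ℂ => 1 - w ^ 2) (-(2*z)) z := by
    intro z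
    have := (hasDerivAt_pow 2 z).const_sub 1
    exact this.congr_deriv (by push_cast; ring)
  have hW : ∀ z : ℂ, (1 - z ^ 2) ∈ Complex.slitPlane → ∀ c : ℂ,
      HasDerivAt (fun w : ℂ => (1 - w ^ 2) ^ c) (c * (1 - z^2) ^ (c-1) * (-(2*z))) z := by
    intro z hz c
    exact (hlin z).cpow_const hz
  intro ρ hρ
  obtain ⟨hρ0, hρ1⟩ := hρ
  have hρIoo : ρ ∈ Set.Ioo (0:ℝ) 1 := ⟨hρ0, hρ1⟩
  have hmem : Set.Ioo (0:ℝ) 1 ∈ nhds ρ := isOpen_Ioo.mem_nhds hρIoo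
  have huIoo : ContDiffOn ℝ (⊤:ℕ∞) u (Set.Ioo 0 1) := hu.mono Set.Ioo_subset_Icc_self
  have hdu : ContDiffOn ℝ (⊤:ℕ∞) (deriv u) (Set.Ioo 0 1) :=
    huIoo.deriv_of_isOpen isOpen_Ioo (by simp)
  have hu1 : ∀ x ∈ Set.Ioo (0:ℝ) 1, HasDerivAt u (deriv u x) x := fun x hx =>
    ((huIoo.contDiffAt (isOpen_Ioo.mem_nhds hx)).differentiableAt (by simp)).hasDerivAt
  have hu2 : HasDerivAt (deriv u) (deriv (deriv u) ρ) ρ :=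
    ((hdu.contDiffAt hmem).differentiableAt (by simp)).hasDerivAt
  have hslit : ∀ x ∈ Set.Ioo (0:ℝ) 1, (1 - (x:ℂ) ^ 2) ∈ Complex.slitPlane := by
    intro x hx
    rw [Complex.mem_slitPlane_iff]
    left
    have h : (1 - (x:ℂ)^2) = ((1 - x^2 : ℝ) : ℂ) := by push_cast; ring
    rw [h, Complex.ofReal_re]
    nlinarith [hx.1, hx.2]
  -- first derivative of the product, valid near ρ
  have hf1 : ∀ x ∈ Set.Ioo (0:ℝ) 1,
      HasDerivAt (fun x : ℝ => (1 - (x:ℂ) ^ 2) ^ (lam / 2) * u x)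
        ((lam/2 * (1 - (x:ℂ)^2) ^ (lam/2-1) * (-(2*(x:ℂ)))) * u x
          + (1 - (x:ℂ)^2) ^ (lam/2) * deriv u x) x := by
    intro x hx
    exact ((hW x (hslit x hx) (lam/2)).comp_ofReal).mul (hu1 x hx)
  set g : ℝ → ℂ := fun x =>
    (lam/2 * (1 - (x:ℂ)^2) ^ (lam/2-1) * (-(2*(x:ℂ)))) * u x
      + (1 - (x:ℂ)^2) ^ (lam/2) * deriv u x with hg_def
  have hev : deriv (fun x : ℝ => (1 - (x:ℂ) ^ 2) ^ (lam / 2) * u x) =ᶠ[nhds ρ] g := by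
    filter_upwards [hmem] with x hx
    exact (hf1 x hx).deriv
  -- second derivative value
  have hgd : HasDerivAt g
      ((lam/2 * ((lam/2-1) * (1 - (ρ:ℂ)^2) ^ (lam/2-1-1) * (-(2*(ρ:ℂ))) * (-(2*(ρ:ℂ)))
          + (1 - (ρ:ℂ)^2) ^ (lam/2-1) * (-2))) * u ρ
        + (lam/2 * (1 - (ρ:ℂ)^2) ^ (lam/2-1) * (-(2*(ρ:ℂ)))) * deriv u ρ
        + ((lam/2 * (1 - (ρ:ℂ)^2) ^ (lam/2-1) * (-(2*(ρ:ℂ)))) * deriv u ρ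
          + (1 - (ρ:ℂ)^2) ^ (lam/2) * deriv (deriv u) ρ)) ρ := by
    have hw1 : HasDerivAt (fun x : ℝ => lam/2 * (1 - (x:ℂ)^2) ^ (lam/2-1) * (-(2*(x:ℂ))))
        (lam/2 * ((lam/2-1) * (1 - (ρ:ℂ)^2) ^ (lam/2-1-1) * (-(2*(ρ:ℂ))) * (-(2*(ρ:ℂ)))
          + (1 - (ρ:ℂ)^2) ^ (lam/2-1) * (-2))) ρ := by
      have hC : HasDerivAt (fun z : ℂ => lam/2 * ((1 - z^2) ^ (lam/2-1) * (-(2*z))))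
          (lam/2 * ((lam/2-1) * (1 - (ρ:ℂ)^2) ^ (lam/2-1-1) * (-(2*(ρ:ℂ))) * (-(2*(ρ:ℂ)))
            + (1 - (ρ:ℂ)^2) ^ (lam/2-1) * (-2))) (ρ:ℂ) := by
        have hm : HasDerivAt (fun z : ℂ => -(2*z)) (-2) (ρ:ℂ) := by
          simpa using ((hasDerivAt_id (ρ:ℂ)).const_mul (2:ℂ)).fun_neg
        exact ((hW ρ (hslit ρ hρIoo) (lam/2-1)).mul hm).const_mul (lam/2)
      have := hC.comp_ofReal
      convert this using 2 with x
      ring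
    exact (hw1.mul (hu1 ρ hρIoo)).add
      ((((hW ρ (hslit ρ hρIoo) (lam/2)).comp_ofReal)).mul hu2)
  have h2 : deriv (deriv (fun x : ℝ => (1 - (x:ℂ) ^ 2) ^ (lam / 2) * u x)) ρ
      = (lam/2 * ((lam/2-1) * (1 - (ρ:ℂ)^2) ^ (lam/2-1-1) * (-(2*(ρ:ℂ))) * (-(2*(ρ:ℂ)))
          + (1 - (ρ:ℂ)^2) ^ (lam/2-1) * (-2))) * u ρ
        + (lam/2 * (1 - (ρ:ℂ)^2) ^ (lam/2-1) * (-(2*(ρ:ℂ)))) * deriv u ρ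
        + ((lam/2 * (1 - (ρ:ℂ)^2) ^ (lam/2-1) * (-(2*(ρ:ℂ)))) * deriv u ρ
          + (1 - (ρ:ℂ)^2) ^ (lam/2) * deriv (deriv u) ρ) := by
    rw [hev.deriv_eq]; exact hgd.deriv
  have h1 : deriv (fun x : ℝ => (1 - (x:ℂ) ^ 2) ^ (lam / 2) * u x) ρ
      = (lam/2 * (1 - (ρ:ℂ)^2) ^ (lam/2-1) * (-(2*(ρ:ℂ)))) * u ρ
        + (1 - (ρ:ℂ)^2) ^ (lam/2) * deriv u ρ := (hf1 ρ hρIoo).deriv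
  -- nonvanishing facts
  have hrC : (ρ:ℂ) ≠ 0 := by exact_mod_cast ne_of_gt hρ0
  have hsC : (1 - (ρ:ℂ)^2) ≠ 0 := by
    have h : (1 - (ρ:ℂ)^2) = ((1 - ρ^2 : ℝ) : ℂ) := by push_cast; ring
    rw [h]
    exact_mod_cast ne_of_gt (by nlinarith : (0:ℝ) < 1 - ρ^2)
  -- cpow identities
  set r := (ρ:ℂ) with hrdef
  have hB : (1 - r^2)^(lam/2) = (1 - r^2) * (1 - r^2)^(lam/2 - 1) := by
    conv_lhs => rw [show lam/2 = 1 + (lam/2 - 1) by ring, Complex.cpow_add _ _ hsC,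
      Complex.cpow_one]
  have hC : (1 - r^2)^(lam/2) = (1 - r^2)^2 * (1 - r^2)^(lam/2 - 1 - 1) := by
    conv_lhs => rw [show lam/2 = 1 + (1 + (lam/2 - 1 - 1)) by ring, Complex.cpow_add _ _ hsC,
      Complex.cpow_add _ _ hsC, Complex.cpow_one]
    ring
  have hode' := hode ρ hρIoo
  rw [h1, h2]
  linear_combination key lam r ((1 - r^2)^(lam/2)) (((Vpot ρ : ℝ) : ℂ)) (u ρ) (deriv u ρ)
    (deriv (deriv u) ρ) hrC hsC hode' ((1 - r^2)^(lam/2 - 1)) ((1 - r^2)^(lam/2 - 1 - 1)) hB hC
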